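/- There does not exist a hyperbolic triangle with angles α, β, γ and side lengths a, b, c (with c opposite γ) such that γ ∈ ℚπ, α + β ∈ ℚπ, and both a and b are algebraic. -/

import Mathlib

open Real

lemma algC {x : ℝ} (h : IsAlgebraic ℚ x) : IsAlgebraic ℚ (x : ℂ) := by
  have := h.algebraMap (A := ℂ)
  simpa using this

lemma algR {x : ℝ} (h : IsAlgebraic ℚ (x : ℂ)) : IsAlgebraic ℚ x := by
  have hinj : Function.Injective (algebraMap ℝ ℂ) := fun u v huv => by
    simpa using huv
  exact (isAlgebraic_algebraMap_iff hinj).mp (by simpa using h)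

lemma int_of_pow_eq_one {z : ℂ} {n : ℕ} (hn : n ≠ 0) (h : z ^ n = 1) : IsIntegral ℚ z := by
  refine ⟨Polynomial.X ^ n - Polynomial.C 1, Polynomial.monic_X_pow_sub_C 1 hn, ?_⟩
  simp [h]

lemma alg_cos_rat_pi (q : ℚ) : IsAlgebraic ℚ (Real.cos ((q : ℝ) * π)) := by
  apply algR
  rw [Complex.ofReal_cos]
  set w : ℂ := (((q : ℝ) * π : ℝ) : ℂ) with hw
  set z : ℂ := Complex.exp (w * Complex.I) with hz
  have hc : ((q.den : ℂ)) * ((q : ℚ) : ℂ) = ((q.num : ℤ) : ℂ) := by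
    exact_mod_cast congrArg (Rat.cast (K := ℂ)) (by rw [mul_comm]; exact_mod_cast Rat.mul_den_eq_num q)
  have hpow : z ^ (2 * q.den) = 1 := by
    rw [hz, ← Complex.exp_nat_mul]
    have he : ((2 * q.den : ℕ) : ℂ) * (w * Complex.I) = ((q.num : ℤ) : ℂ) * (2 * (π : ℂ) * Complex.I) := by
      rw [hw]
      push_cast
      linear_combination (2 * (π : ℂ) * Complex.I) * hc
    rw [he, Complex.exp_int_mul_two_pi_mul_I]
  have hzint : IsIntegral ℚ z := int_of_pow_eq_one (by positivity) hpow
  have hcos : Complex.cos w = (z + z⁻¹) * (2 : ℂ)⁻¹ := by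
    have h2 := Complex.two_cos w
    rw [neg_mul, Complex.exp_neg, ← hz] at h2
    linear_combination h2 / 2
  rw [hcos]
  rw [show (IsAlgebraic ℚ ((z + z⁻¹) * (2:ℂ)⁻¹)) ↔ IsIntegral ℚ ((z + z⁻¹) * (2:ℂ)⁻¹) from isAlgebraic_iff_isIntegral]
  have h2int : IsIntegral ℚ ((2 : ℂ))⁻¹ := by
    have : ((2 : ℂ)) = algebraMap ℚ ℂ 2 := by norm_num
    rw [this]
    exact (isIntegral_algebraMap).inv
  exact ((hzint.add hzint.inv).mul h2int)

set_option maxHeartbeats 1000000 in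
theorem no_hyperbolic_triangle_with_algebraic_legs
    (lindemann : ∀ (n : ℕ) (α c : Fin n → ℂ), Function.Injective α →
      (∀ i, IsAlgebraic ℚ (α i)) → (∀ i, IsAlgebraic ℚ (c i)) →
      (∑ i, c i * Complex.exp (α i)) = 0 → ∀ i, c i = 0) :
    ¬ ∃ α β γ a b c : ℝ,
      α ∈ Set.Ioo 0 π ∧ β ∈ Set.Ioo 0 π ∧ γ ∈ Set.Ioo 0 π ∧
      0 < a ∧ 0 < b ∧ 0 < c ∧
      Real.cos γ = (Real.cosh a * Real.cosh b - Real.cosh c) / (Real.sinh a * Real.sinh b) ∧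
      Real.cos α = (Real.cosh b * Real.cosh c - Real.cosh a) / (Real.sinh b * Real.sinh c) ∧
      Real.cos β = (Real.cosh c * Real.cosh a - Real.cosh b) / (Real.sinh c * Real.sinh a) ∧
      Real.sinh a / Real.sin α = Real.sinh b / Real.sin β ∧
      Real.sinh b / Real.sin β = Real.sinh c / Real.sin γ ∧
      (∃ q : ℚ, γ = (q : ℝ) * π) ∧ (∃ q : ℚ, α + β = (q : ℝ) * π) ∧
      IsAlgebraic ℚ a ∧ IsAlgebraic ℚ b := by
  rintro ⟨α, β, γ, a, b, c, ⟨hα0, hαπ⟩, ⟨hβ0, hβπ⟩, ⟨hγ0, hγπ⟩, ha, hb, hc, hG, hA, hB,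
    hs1, hs2, ⟨q, hq⟩, ⟨r, hr⟩, haA, hbA⟩
  have hsa : 0 < sinh a := Real.sinh_pos_iff.mpr ha
  have hsb : 0 < sinh b := Real.sinh_pos_iff.mpr hb
  have hsc : 0 < sinh c := Real.sinh_pos_iff.mpr hc
  have hsinγ : 0 < Real.sin γ := Real.sin_pos_of_pos_of_lt_pi hγ0 hγπ
  have hsinα : 0 < Real.sin α := Real.sin_pos_of_pos_of_lt_pi hα0 hαπ
  have hsinβ : 0 < Real.sin β := Real.sin_pos_of_pos_of_lt_pi hβ0 hβπ
  have hC1 : 1 < cosh c := Real.one_lt_cosh.mpr hc.ne'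
  have e1 : sinh a ^ 2 = cosh a ^ 2 - 1 := Real.sinh_sq a
  have e2 : sinh b ^ 2 = cosh b ^ 2 - 1 := Real.sinh_sq b
  have e3 : sinh c ^ 2 = cosh c ^ 2 - 1 := Real.sinh_sq c
  have e4 : Real.cos γ * (sinh a * sinh b) = cosh a * cosh b - cosh c := by
    rw [hG, div_mul_cancel₀]
    exact (mul_pos hsa hsb).ne'
  have e5 : Real.cos α * (sinh b * sinh c) = cosh b * cosh c - cosh a := by
    rw [hA, div_mul_cancel₀]
    exact (mul_pos hsb hsc).ne'
  have e6 : Real.cos β * (sinh c * sinh a) = cosh c * cosh a - cosh b := by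
    rw [hB, div_mul_cancel₀]
    exact (mul_pos hsc hsa).ne'
  have e7 : sinh a * Real.sin γ = sinh c * Real.sin α :=
    (div_eq_div_iff hsinα.ne' hsinγ.ne').mp (hs1.trans hs2)
  have e8 : sinh b * Real.sin γ = sinh c * Real.sin β :=
    (div_eq_div_iff hsinβ.ne' hsinγ.ne').mp hs2
  have e9 : Real.sin γ ^ 2 = 1 - Real.cos γ ^ 2 := by
    linear_combination Real.sin_sq_add_cos_sq γ
  have e10 : Real.cos (α + β) = Real.cos α * Real.cos β - Real.sin α * Real.sin β :=
    Real.cos_add α β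
  have h1 : Real.cos α * Real.cos β * (sinh a * sinh b * sinh c ^ 2)
      = (cosh b * cosh c - cosh a) * (cosh c * cosh a - cosh b) := by
    linear_combination (Real.cos β * (sinh c * sinh a)) * e5 + (cosh b * cosh c - cosh a) * e6
  have h2 : Real.sin α * Real.sin β * (sinh a * sinh b * sinh c ^ 2)
      = (1 - Real.cos γ ^ 2) * sinh a ^ 2 * sinh b ^ 2 := by
    linear_combination (sinh a ^ 2 * sinh b ^ 2) * e9
      + (-(sinh c * Real.sin β * sinh a * sinh b)) * e7
      + (-(sinh a ^ 2 * sinh b * Real.sin γ)) * e8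
  have h3 : Real.cos (α + β) * (sinh a * sinh b * sinh c ^ 2)
      = (cosh b * cosh c - cosh a) * (cosh c * cosh a - cosh b)
        - (1 - Real.cos γ ^ 2) * sinh a ^ 2 * sinh b ^ 2 := by
    linear_combination (sinh a * sinh b * sinh c ^ 2) * e10 + h1 - h2
  have h4 : (Real.cos γ + Real.cos (α + β)) * (cosh c + 1) * (sinh a * sinh b * sinh c ^ 2)
      = (1 - Real.cos γ ^ 2) * (sinh a * sinh b) * (sinh a * sinh b * sinh c ^ 2) := by
    linear_combination (cosh c + 1) * h3 + ((-1:ℝ)*(sinh a)^2*(sinh b)^2 + (Real.cos γ)*(sinh a)*(sinh b) + (Real.cos γ)^2*(sinh a)^2*(sinh b)^2 + (cosh c)*(Real.cos γ)*(sinh a)*(sinh b)) * e3 + ((-1:ℝ)*(sinh a)^2*(sinh b)^2 + (-1:ℝ)*(Real.cos γ)*(sinh a)*(sinh b) + (Real.cos γ)*(sinh a)^3*(sinh b)^3 + (-1:ℝ)*(cosh c)*(sinh a)^2*(sinh b)^2 + (cosh c)*(Real.cos γ)*(sinh a)*(sinh b) + (cosh c)^2*(Real.cos γ)*(sinh a)*(sinh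 b) + (-1:ℝ)*(cosh b)^2 + (cosh b)^2*(Real.cos γ)*(sinh a)*(sinh b) + (-1:ℝ)*(cosh b)^2*(cosh c) + (cosh a)*(cosh b) + (-1:ℝ)*(cosh a)*(cosh b)*(sinh a)^2*(sinh b)^2 + (cosh a)*(cosh b)*(cosh c) + (cosh a)*(cosh b)*(cosh c)^2 + (-1:ℝ)*(cosh a)*(cosh b)^3 + (-1:ℝ)*(cosh a)^2 + (cosh a)^2*(Real.cos γ)*(sinh a)*(sinh b) + (-1:ℝ)*(cosh a)^2*(cosh c) + (cosh a)^2*(cosh b)^2 + (-1:ℝ)*(cosh a)^2*(cosh b)^2*(Real.cos γ)*(sinh a)*(sinh b) + (cosh a)^2*(cosh b)^2*(cosh c) + (-1:ℝ)*(cosh a)^3*(cosh b) + (cosh a)^3*(cosh b)^3) * e4 + ((Real.cos γ)*(sinh a)*(sinh b)^3 + (Real.cos γ)^2*(sinh b)^2 + (Real.cos γ)^2*(sinh b)^4 + (-1:ℝ)*(Real.cos γ)^2*(sinh a)^2*(sinh b)^4 + (-1:ℝ)*(cosh b)^2*(Real.cos γ)^2*(sinh b)^2 + (-1:ℝ)*(cosh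 a)*(cosh b)*(sinh b)^2 + (2:ℝ)*(cosh a)*(cosh b)*(Real.cos γ)*(sinh a)*(sinh b)^3 + (-1:ℝ)*(cosh a)^2*(Real.cos γ)^2*(sinh b)^2 + (-1:ℝ)*(cosh a)^2*(Real.cos γ)^2*(sinh b)^4 + (-1:ℝ)*(cosh a)^2*(cosh b)^2*(sinh b)^2 + (cosh a)^2*(cosh b)^2*(Real.cos γ)^2*(sinh b)^2) * e1 + ((-1:ℝ)*(Real.cos γ)*(sinh a)*(sinh b) + (-1:ℝ)*(Real.cos γ)^2*(sinh b)^2 + (cosh a)*(cosh b) + (-2:ℝ)*(cosh a)*(cosh b)*(Real.cos γ)*(sinh a)*(sinh b) + (cosh a)^2*(Real.cos γ)*(sinh a)*(sinh b) + (2:ℝ)*(cosh a)^2*(Real.cos γ)^2*(sinh b)^2 + (cosh a)^2*(cosh b)^2 + (-1:ℝ)*(cosh a)^3*(cosh b) + (2:ℝ)*(cosh a)^3*(cosh b)*(Real.cos γ)*(sinh a)*(sinh b) + (-1:ℝ)*(cosh a)^4*(Real.cos γ)^2*(sinh b)^2 + (-1:ℝ)*(cosh a)^4*(cosh b)^2)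 * e2
  have key : (Real.cos γ + Real.cos (α + β)) * (cosh c + 1)
      = (1 - Real.cos γ ^ 2) * (sinh a * sinh b) := by
    have hne : (sinh a * sinh b * sinh c ^ 2) ≠ 0 := by positivity
    exact mul_right_cancel₀ hne h4
  have hg2 : 0 < 1 - Real.cos γ ^ 2 := e9 ▸ pow_pos hsinγ 2
  have hGK : 0 < Real.cos γ + Real.cos (α + β) := by
    have hpos : 0 < (Real.cos γ + Real.cos (α + β)) * (cosh c + 1) := by
      rw [key]; exact mul_pos hg2 (mul_pos hsa hsb)
    by_contra hcon
    push_neg at hcon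
    have hnp : (Real.cos γ + Real.cos (α + β)) * (cosh c + 1) ≤ 0 :=
      mul_nonpos_iff.mpr (Or.inr ⟨hcon, by linarith⟩)
    linarith
  set T : ℝ := Real.cos γ + (1 - Real.cos γ ^ 2) / (Real.cos γ + Real.cos (α + β)) with hTdef
  have hmain : cosh a * cosh b + 1 = T * (sinh a * sinh b) := by
    rw [hTdef]
    field_simp
    linear_combination key - (Real.cos γ + Real.cos (α + β)) * e4
  have hGint : IsIntegral ℚ (Real.cos γ) := by
    rw [hq]; exact isAlgebraic_iff_isIntegral.mp (alg_cos_rat_pi q)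
  have hKint : IsIntegral ℚ (Real.cos (α + β)) := by
    rw [hr]; exact isAlgebraic_iff_isIntegral.mp (alg_cos_rat_pi r)
  have hTint : IsIntegral ℚ T := by
    rw [hTdef, div_eq_mul_inv]
    exact hGint.add ((isIntegral_one.sub (hGint.pow 2)).mul (hGint.add hKint).inv)
  have haI : IsIntegral ℚ a := isAlgebraic_iff_isIntegral.mp haA
  have hbI : IsIntegral ℚ b := isAlgebraic_iff_isIntegral.mp hbA
  have h4inv : IsIntegral ℚ ((4:ℝ)⁻¹) := by
    have h44 : ((4:ℝ))⁻¹ = algebraMap ℚ ℝ (1/4) := by norm_num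
    rw [h44]; exact isIntegral_algebraMap
  have h2inv : IsIntegral ℚ ((2:ℝ)⁻¹) := by
    have h22 : ((2:ℝ))⁻¹ = algebraMap ℚ ℝ (1/2) := by norm_num
    rw [h22]; exact isIntegral_algebraMap
  have hexp : (1 - T) / 4 * exp (a + b) + (1 + T) / 4 * exp (a + -b)
      + (1 + T) / 4 * exp (-a + b) + (1 - T) / 4 * exp (-a + -b) + 1 = 0 := by
    rw [Real.exp_add, Real.exp_add, Real.exp_add, Real.exp_add]
    rw [Real.cosh_eq, Real.cosh_eq, Real.sinh_eq, Real.sinh_eq] at hmain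
    linear_combination hmain
  have hexpC : (1 - (T:ℂ)) / 4 * Complex.exp ((a:ℂ) + b) + (1 + (T:ℂ)) / 4 * Complex.exp ((a:ℂ) + -b)
      + (1 + (T:ℂ)) / 4 * Complex.exp (-(a:ℂ) + b) + (1 - (T:ℂ)) / 4 * Complex.exp (-(a:ℂ) + -b) + 1 = 0 := by
    have h := congrArg (fun x : ℝ => (x : ℂ)) hexp
    push_cast [Complex.ofReal_exp] at h
    linear_combination h
  rcases eq_or_ne a b with hab | hab
  · subst hab
    set ar : Fin 3 → ℝ := ![a + a, 0, -a + -a] with har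
    set cr : Fin 3 → ℝ := ![(1 - T)/4, (1 + T)/2 + 1, (1 - T)/4] with hcr
    have hinj : Function.Injective (fun i => ((ar i : ℝ) : ℂ)) := by
      intro i j hij
      have hij' : ar i = ar j := Complex.ofReal_inj.mp (by simpa using hij)
      fin_cases i <;> fin_cases j <;>
        first
          | rfl
          | (exfalso; simp [har] at hij'; linarith)
    have halg : ∀ i, IsAlgebraic ℚ ((ar i : ℝ) : ℂ) := by
      intro i
      fin_cases i <;>
        simp only [har, Matrix.cons_val_zero, Matrix.cons_val_one, Matrix.head_cons, Matrix.cons_val_two, Matrix.tail_cons, Matrix.cons_val_three, Matrix.cons_val_four] <;> apply algC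
      · exact (haI.add haI).isAlgebraic
      · exact isIntegral_zero.isAlgebraic
      · exact ((haI.neg).add haI.neg).isAlgebraic
    have hcalg : ∀ i, IsAlgebraic ℚ ((cr i : ℝ) : ℂ) := by
      intro i
      fin_cases i <;>
        simp only [hcr, Matrix.cons_val_zero, Matrix.cons_val_one, Matrix.head_cons, Matrix.cons_val_two, Matrix.tail_cons, Matrix.cons_val_three, Matrix.cons_val_four] <;> apply algC <;> rw [div_eq_mul_inv]
      · exact ((isIntegral_one.sub hTint).mul h4inv).isAlgebraic
      · exact (((isIntegral_one.add hTint).mul h2inv).add isIntegral_one).isAlgebraic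
      · exact ((isIntegral_one.sub hTint).mul h4inv).isAlgebraic
    have hsum : (∑ i, ((cr i : ℝ) : ℂ) * Complex.exp ((ar i : ℝ) : ℂ)) = 0 := by
      rw [Fin.sum_univ_three]
      rw [show (a:ℂ) + -a = 0 by ring, show -(a:ℂ) + a = 0 by ring] at hexpC
      rw [Complex.exp_zero] at hexpC
      simp only [har, hcr, Matrix.cons_val_zero, Matrix.cons_val_one, Matrix.head_cons,
        Matrix.cons_val_two, Matrix.tail_cons]
      push_cast
      rw [Complex.exp_zero]
      linear_combination hexpC
    have happ := lindemann 3 _ _ hinj halg hcalg hsum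
    have h0 := happ 0
    have h1 := happ 1
    simp only [hcr, Matrix.cons_val_zero, Matrix.cons_val_one, Matrix.head_cons] at h0 h1
    have h0' : (1 - T)/4 = 0 := by exact_mod_cast h0
    have h1' : (1 + T)/2 + 1 = 0 := by exact_mod_cast h1
    linarith
  · set ar : Fin 5 → ℝ := ![a + b, a + -b, -a + b, -a + -b, 0] with har
    set cr : Fin 5 → ℝ := ![(1 - T)/4, (1 + T)/4, (1 + T)/4, (1 - T)/4, 1] with hcr
    have hinj : Function.Injective (fun i => ((ar i : ℝ) : ℂ)) := by
      intro i j hij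
      have hij' : ar i = ar j := Complex.ofReal_inj.mp (by simpa using hij)
      fin_cases i <;> fin_cases j <;>
        first
          | rfl
          | (exfalso; simp [har] at hij'; linarith)
          | (exfalso; simp [har] at hij'; exact hab (by linarith))
    have halg : ∀ i, IsAlgebraic ℚ ((ar i : ℝ) : ℂ) := by
      intro i
      fin_cases i <;>
        simp only [har, Matrix.cons_val_zero, Matrix.cons_val_one, Matrix.head_cons, Matrix.cons_val_two, Matrix.tail_cons, Matrix.cons_val_three, Matrix.cons_val_four] <;> apply algC
      · exact (haI.add hbI).isAlgebraic
      · exact (haI.add hbI.neg).isAlgebraic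
      · exact (haI.neg.add hbI).isAlgebraic
      · exact (haI.neg.add hbI.neg).isAlgebraic
      · exact isIntegral_zero.isAlgebraic
    have hcalg : ∀ i, IsAlgebraic ℚ ((cr i : ℝ) : ℂ) := by
      intro i
      fin_cases i <;>
        simp only [hcr, Matrix.cons_val_zero, Matrix.cons_val_one, Matrix.head_cons, Matrix.cons_val_two, Matrix.tail_cons, Matrix.cons_val_three, Matrix.cons_val_four] <;> apply algC <;>
        first
          | rw [div_eq_mul_inv]
          | skip
      · exact ((isIntegral_one.sub hTint).mul h4inv).isAlgebraic
      · exact ((isIntegral_one.add hTint).mul h4inv).isAlgebraic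
      · exact ((isIntegral_one.add hTint).mul h4inv).isAlgebraic
      · exact ((isIntegral_one.sub hTint).mul h4inv).isAlgebraic
      · exact isIntegral_one.isAlgebraic
    have hsum : (∑ i, ((cr i : ℝ) : ℂ) * Complex.exp ((ar i : ℝ) : ℂ)) = 0 := by
      rw [Fin.sum_univ_five]
      simp only [har, hcr, Matrix.cons_val_zero, Matrix.cons_val_one, Matrix.head_cons,
        Matrix.cons_val_two, Matrix.tail_cons, Matrix.cons_val_three, Matrix.cons_val_four]
      push_cast
      rw [Complex.exp_zero]
      linear_combination hexpC
    have happ := lindemann 5 _ _ hinj halg hcalg hsum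
    have h4' := happ 4
    simp only [hcr] at h4'
    norm_num [Matrix.cons_val_four, Matrix.tail_cons, Matrix.head_cons] at h4'
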